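/- Let K be a finite set of finite algebras closed under homomorphic images and subalgebras, and let V = HSP(K). Then every finite subdirectly irreducible algebra S ∈ V whose monolith cover (π ≺ μ in a representation S ≅ B/π) has a two-element minimal set U = {x, y} with π trivial on U (boolean type behavior as in the previous statement) belongs to HS(K); in particular, |S| is bounded by the maximum cardinality of members of K. -/

import Mathlib

/-- A purely functional first-order signature. -/
structure Signature where
  ops : Type
  arity : ops → ℕ

/-- An algebra for a signature: an interpretation of each operation symbol. -/
structure UAlg (σ : Signature) (A : Type) where
  interp : ∀ o : σ.ops, (Fin (σ.arity o) → A) → A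

/-- Terms in `n` variables over a signature. -/
inductive Term (σ : Signature) (n : ℕ) : Type
  | var : Fin n → Term σ n
  | op : (o : σ.ops) → (Fin (σ.arity o) → Term σ n) → Term σ n

/-- Evaluation of a term at a tuple. -/
def Term.eval {σ : Signature} {A : Type} (Alg : UAlg σ A) {n : ℕ} :
    Term σ n → (Fin n → A) → A
  | .var i, v => v i
  | .op o ts, v => Alg.interp o fun j => (ts j).eval Alg v

/-- A congruence: an equivalence relation compatible with all operations. -/
def IsCongruence {σ : Signature} {A : Type} (Alg : UAlg σ A) (r : A → A → Prop) : Prop :=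
  Equivalence r ∧ ∀ (o : σ.ops) (x y : Fin (σ.arity o) → A),
    (∀ i, r (x i) (y i)) → r (Alg.interp o x) (Alg.interp o y)

/-- A `k`-ary polynomial operation: a term operation with parameters. -/
def IsPolynomial {σ : Signature} {A : Type} (Alg : UAlg σ A) {k : ℕ}
    (f : (Fin k → A) → A) : Prop :=
  ∃ (n : ℕ) (t : Term σ (k + n)) (params : Fin n → A),
    ∀ x : Fin k → A, f x = t.eval Alg (Fin.append x params)

/-- A unary polynomial operation. -/
def IsUnaryPolynomial {σ : Signature} {A : Type} (Alg : UAlg σ A) (f : A → A) : Prop :=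
  IsPolynomial Alg (k := 1) fun x => f (x 0)

/-- The term condition TermCond(α, β; γ). -/
def TermCond {σ : Signature} {A : Type} (Alg : UAlg σ A) (α β γ : A → A → Prop) : Prop :=
  ∀ (n m : ℕ) (t : Term σ (n + m)) (a₁ a₂ : Fin n → A) (b₁ b₂ : Fin m → A),
    (∀ i, α (a₁ i) (a₂ i)) → (∀ i, β (b₁ i) (b₂ i)) →
    γ (t.eval Alg (Fin.append a₁ b₁)) (t.eval Alg (Fin.append a₁ b₂)) →
    γ (t.eval Alg (Fin.append a₂ b₁)) (t.eval Alg (Fin.append a₂ b₂))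

/-- β is strongly abelian over γ. -/
def StronglyAbelianOver {σ : Signature} {A : Type} (Alg : UAlg σ A)
    (β γ : A → A → Prop) : Prop :=
  ∀ (n m : ℕ) (t : Term σ (n + m)) (a₁ a₂ : Fin n → A) (b₁ b₂ b₃ : Fin m → A),
    (∀ i, β (a₁ i) (a₂ i)) → (∀ i, β (b₁ i) (b₂ i)) → (∀ i, β (b₂ i) (b₃ i)) →
    γ (t.eval Alg (Fin.append a₁ b₁)) (t.eval Alg (Fin.append a₂ b₂)) →
    γ (t.eval Alg (Fin.append a₁ b₃)) (t.eval Alg (Fin.append a₂ b₃))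

/-- The least congruence containing a binary relation. -/
def congClosure {σ : Signature} {A : Type} (Alg : UAlg σ A) (R : A → A → Prop) :
    A → A → Prop :=
  fun a b => ∀ r, IsCongruence Alg r → (∀ x y, R x y → r x y) → r a b

/-- A subset closed under the operations. -/
def IsSubalgebra {σ : Signature} {A : Type} (Alg : UAlg σ A) (s : Set A) : Prop :=
  ∀ (o : σ.ops) (x : Fin (σ.arity o) → A), (∀ j, x j ∈ s) → Alg.interp o x ∈ s

/-- The power algebra `A^I`. -/
def UAlg.pow {σ : Signature} {A : Type} (Alg : UAlg σ A) (I : Type) :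
    UAlg σ (I → A) :=
  ⟨fun o x i => Alg.interp o fun j => x j i⟩

/-- The product of a family of algebras. -/
def UAlg.pi {σ : Signature} {ι : Type} {A : ι → Type} (Alg : ∀ i, UAlg σ (A i)) :
    UAlg σ (∀ i, A i) :=
  ⟨fun o x i => (Alg i).interp o fun j => x j i⟩

/-- The binary product of two algebras. -/
def UAlg.prod2 {σ : Signature} {A B : Type} (AlgA : UAlg σ A) (AlgB : UAlg σ B) :
    UAlg σ (A × B) :=
  ⟨fun o x => (AlgA.interp o fun j => (x j).1, AlgB.interp o fun j => (x j).2)⟩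

/-- The algebra structure on a subalgebra. -/
def UAlg.sub {σ : Signature} {A : Type} (Alg : UAlg σ A) (s : Set A)
    (hs : IsSubalgebra Alg s) : UAlg σ s :=
  ⟨fun o x => ⟨Alg.interp o fun j => (x j : A), hs o _ fun j => (x j).2⟩⟩

/-- Homomorphisms of algebras. -/
def IsHom {σ : Signature} {A B : Type} (AlgA : UAlg σ A) (AlgB : UAlg σ B)
    (f : A → B) : Prop :=
  ∀ (o : σ.ops) (x : Fin (σ.arity o) → A), f (AlgA.interp o x) = AlgB.interp o (f ∘ x)

/-- An idempotent unary polynomial. -/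
def IsIdempotentPoly {σ : Signature} {A : Type} (Alg : UAlg σ A) (e : A → A) : Prop :=
  IsUnaryPolynomial Alg e ∧ ∀ x, e (e x) = e x

/-- A (⊥, δ)-minimal set. -/
def IsMinimalSet {σ : Signature} {A : Type} (Alg : UAlg σ A) (δ : A → A → Prop)
    (U : Set A) : Prop :=
  (∃ e, IsIdempotentPoly Alg e ∧ U = Set.range e ∧ ∃ a b, δ a b ∧ e a ≠ e b) ∧
  ∀ e', IsIdempotentPoly Alg e' → Set.range e' ⊆ U → (∃ a b, δ a b ∧ e' a ≠ e' b) →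
    Set.range e' = U

/-- μ is an atom of the congruence lattice. -/
def IsAtomCong {σ : Signature} {A : Type} (Alg : UAlg σ A) (μ : A → A → Prop) : Prop :=
  IsCongruence Alg μ ∧ μ ≠ (fun a b => a = b) ∧
  ∀ θ, IsCongruence Alg θ → (∀ a b, θ a b → μ a b) → θ = (fun a b => a = b) ∨ θ = μ

/-- A (⊥, μ)-trace in a minimal set U. -/
def IsTrace {A : Type} (μ : A → A → Prop) (U N : Set A) : Prop :=
  (∃ a ∈ U, N = {x ∈ U | μ x a}) ∧ ∃ x ∈ N, ∃ y ∈ N, x ≠ y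

/-- The body of a minimal set: the union of its traces. -/
def Body {A : Type} (μ : A → A → Prop) (U : Set A) : Set A :=
  {x | ∃ N, IsTrace μ U N ∧ x ∈ N}

/-- Polynomial permutations of U (as functions A → A which are bijective on U). -/
def PolPermFun {σ : Signature} {A : Type} (Alg : UAlg σ A) (U : Set A) : Set (A → A) :=
  { p | IsUnaryPolynomial Alg p ∧ Set.BijOn p U U }

/-- Subdirect irreducibility: there is a pair contained in every nontrivial congruence. -/
def IsSI {σ : Signature} {B : Type} (Alg : UAlg σ B) : Prop :=
  ∃ a b : B, a ≠ b ∧ ∀ θ, IsCongruence Alg θ → θ ≠ (fun x y => x = y) → θ a b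

/-- The subalgebra generated by a set. -/
def genSub {σ : Signature} {B : Type} (Alg : UAlg σ B) (s : Set B) : Set B :=
  ⋂₀ {t | IsSubalgebra Alg t ∧ s ⊆ t}

/-- A strongly solvable congruence: connected to ⊥ by strongly abelian covers. -/
def IsStronglySolvable {σ : Signature} {A : Type} (Alg : UAlg σ A)
    (s : A → A → Prop) : Prop :=
  ∃ (n : ℕ) (c : Fin (n + 1) → (A → A → Prop)),
    c 0 = (fun a b => a = b) ∧ c (Fin.last n) = s ∧
    (∀ i, IsCongruence Alg (c i)) ∧
    ∀ i : Fin n, (∀ a b, c i.castSucc a b → c i.succ a b) ∧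
      StronglyAbelianOver Alg (c i.succ) (c i.castSucc)

/-- The set of n-ary term operations of an algebra. -/
def TermFun {σ : Signature} {A : Type} (Alg : UAlg σ A) (n : ℕ) :
    Set ((Fin n → A) → A) :=
  { g | ∃ t : Term σ n, g = fun v => t.eval Alg v }

/-- Let K = {A_i} be a finite set of finite algebras closed under H and S,
V = HSP(K). A finite subdirectly irreducible S ∈ V whose monolith cover has a two-element
minimal set (boolean behaviour), presented minimally as a quotient of B ≤ ∏ A_{g(j)},
belongs to HS(K); in particular |S| is bounded by the largest member of K. -/


theorem term_eval_cong {σ : Signature} {A : Type} (Alg : UAlg σ A) {θ : A → A → Prop}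
    (hθ : IsCongruence Alg θ) {n : ℕ} (t : Term σ n) (v w : Fin n → A)
    (h : ∀ i, θ (v i) (w i)) : θ (t.eval Alg v) (t.eval Alg w) := by
  induction t with
  | var i => exact h i
  | op o ts ih => exact hθ.2 o _ _ fun j => ih j

theorem upoly_cong {σ : Signature} {A : Type} {Alg : UAlg σ A} {e : A → A}
    (he : IsUnaryPolynomial Alg e) {θ : A → A → Prop} (hθ : IsCongruence Alg θ)
    {a b : A} (hab : θ a b) : θ (e a) (e b) := by
  obtain ⟨n, t, params, ht⟩ := he
  have h1 := ht ![a]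
  have h2 := ht ![b]
  simp only [Matrix.cons_val_zero] at h1 h2
  rw [h1, h2]
  refine term_eval_cong Alg hθ t _ _ fun i => ?_
  refine Fin.addCases (fun j => ?_) (fun j => ?_) i
  · rw [Fin.append_left, Fin.append_left]
    have : j = 0 := Fin.eq_zero j
    subst this
    simpa using hab
  · rw [Fin.append_right, Fin.append_right]
    exact hθ.1.refl _

theorem ker_cong {σ : Signature} {A B : Type} (AlgA : UAlg σ A) (AlgB : UAlg σ B)
    (f : A → B) (hf : IsHom AlgA AlgB f) :
    IsCongruence AlgA (fun a b => f a = f b) := by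
  refine ⟨⟨fun _ => rfl, Eq.symm, Eq.trans⟩, fun o x y h => ?_⟩
  show f (AlgA.interp o x) = f (AlgA.interp o y)
  rw [hf, hf]
  congr 1
  funext j
  exact h j

section Join

variable {σ : Signature} {A : Type} {Alg : UAlg σ A} {θ π : A → A → Prop}

theorem join_single {o : σ.ops} (hθ : IsCongruence Alg θ) (hπ : IsCongruence Alg π)
    (x : Fin (σ.arity o) → A) (i : Fin (σ.arity o)) {a b : A}
    (h : Relation.ReflTransGen (fun a b => θ a b ∨ π a b) a b) :
    Relation.ReflTransGen (fun a b => θ a b ∨ π a b)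
      (Alg.interp o (Function.update x i a)) (Alg.interp o (Function.update x i b)) := by
  induction h with
  | refl => exact .refl
  | tail h1 h2 ih =>
    refine ih.tail ?_
    rcases h2 with h2 | h2
    · refine Or.inl (hθ.2 o _ _ fun j => ?_)
      rcases eq_or_ne j i with rfl | hj
      · simpa using h2
      · rw [Function.update_of_ne hj, Function.update_of_ne hj]
        exact hθ.1.refl _
    · refine Or.inr (hπ.2 o _ _ fun j => ?_)
      rcases eq_or_ne j i with rfl | hj
      · simpa using h2
      · rw [Function.update_of_ne hj, Function.update_of_ne hj]
        exact hπ.1.refl _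

theorem join_cong (hθ : IsCongruence Alg θ) (hπ : IsCongruence Alg π) :
    IsCongruence Alg (Relation.ReflTransGen (fun a b => θ a b ∨ π a b)) := by
  constructor
  · refine ⟨fun _ => .refl, ?_, fun h1 h2 => h1.trans h2⟩
    intro a b h
    exact (@Relation.ReflTransGen.symmetric _ _
      ⟨fun _ _ h => h.imp hθ.1.symm hπ.1.symm⟩).symm _ _ h
  · intro o x y h
    have key : ∀ T : Finset (Fin (σ.arity o)),
        Relation.ReflTransGen (fun a b => θ a b ∨ π a b)
          (Alg.interp o x) (Alg.interp o fun j => if j ∈ T then y j else x j) := by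
      intro T
      induction T using Finset.induction_on with
      | empty =>
        exact .refl
      | @insert i T hiT ih =>
        set z : Fin (σ.arity o) → A := fun j => if j ∈ T then y j else x j with hz
        have h1 : (fun j => if j ∈ insert i T then y j else x j)
            = Function.update z i (y i) := by
          funext j
          rcases eq_or_ne j i with rfl | hj
          · simp
          · simp [Function.update_of_ne hj, hz, Finset.mem_insert, hj]
        have h2 : z = Function.update z i (x i) := by
          funext j
          rcases eq_or_ne j i with rfl | hj
          · simp [hz, hiT]
          · rw [Function.update_of_ne hj]
        rw [h1]
        refine ih.trans ?_
        conv_lhs => rw [h2]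
        exact join_single hθ hπ z i (h i)
    have := key Finset.univ
    simpa using this

end Join

/-- Transporting a representation along a homomorphism whose kernel (on Bset)
is below the kernel of f. -/
theorem imageRep {σ : Signature} {B C S : Type} (AlgB : UAlg σ B) (AlgC : UAlg σ C)
    (AlgS : UAlg σ S) (Bset : Set B) (hBsub : IsSubalgebra AlgB Bset)
    (r : B → C) (hr : IsHom AlgB AlgC r)
    (f : Bset → S) (hf : IsHom (UAlg.sub AlgB Bset hBsub) AlgS f)
    (hfs : Function.Surjective f)
    (hwd : ∀ (a b : Bset), r a = r b → f a = f b) :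
    ∃ (hsub : IsSubalgebra AlgC (r '' Bset)) (f' : (r '' Bset : Set C) → S),
      IsHom (UAlg.sub AlgC (r '' Bset) hsub) AlgS f' ∧ Function.Surjective f' := by
  classical
  have hsub : IsSubalgebra AlgC (r '' Bset) := by
    intro o xs hxs
    choose v hv1 hv2 using hxs
    refine ⟨AlgB.interp o v, hBsub o v hv1, ?_⟩
    rw [hr o v]
    congr 1
    funext m
    exact hv2 m
  refine ⟨hsub, fun w => f ⟨w.2.choose, w.2.choose_spec.1⟩, ?_, ?_⟩
  · intro o xs
    -- choose per-coordinate preimages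
    have hmem : ∀ m, (xs m : C) ∈ r '' Bset := fun m => (xs m).2
    choose v hv1 hv2 using hmem
    set vs : Fin (σ.arity o) → Bset := fun m => ⟨v m, hv1 m⟩ with hvs
    set W := (UAlg.sub AlgC (r '' Bset) hsub).interp o xs with hW
    have hWc : r W.2.choose = (W : C) := W.2.choose_spec.2
    have hrv : r (AlgB.interp o v) = (W : C) := by
      rw [hr o v]
      show AlgC.interp o (r ∘ v) = AlgC.interp o fun m => (xs m : C)
      congr 1
      funext m
      exact hv2 m
    have step1 : f ⟨W.2.choose, W.2.choose_spec.1⟩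
        = f ⟨AlgB.interp o v, hBsub o v hv1⟩ := by
      apply hwd
      rw [hWc, hrv]
    have step2 : (⟨AlgB.interp o v, hBsub o v hv1⟩ : Bset)
        = (UAlg.sub AlgB Bset hBsub).interp o vs := rfl
    have step3 := hf o vs
    show f ⟨W.2.choose, W.2.choose_spec.1⟩ = _
    rw [step1, step2, step3]
    congr 1
    funext m
    show f (vs m) = f ⟨(xs m).2.choose, (xs m).2.choose_spec.1⟩
    apply hwd
    exact (hv2 m).trans ((xs m).2.choose_spec.2).symm
  · intro s
    obtain ⟨b, hb⟩ := hfs s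
    have hmem : r (b : B) ∈ r '' Bset := ⟨b, b.2, rfl⟩
    refine ⟨⟨r (b : B), hmem⟩, ?_⟩
    show f ⟨hmem.choose, hmem.choose_spec.1⟩ = s
    have : f ⟨hmem.choose, hmem.choose_spec.1⟩ = f b := by
      apply hwd
      rw [hmem.choose_spec.2]
    exact this.trans hb

theorem stmt_13 {σ : Signature} {ι : Type} [Fintype ι]
    (A : ι → Type) [∀ i, Fintype (A i)] (AlgA : ∀ i, UAlg σ (A i))
    -- K is closed under homomorphic images and subalgebras:
    (hHS : ∀ (i : ι) (s : Set (A i)) (hs : IsSubalgebra (AlgA i) s)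
      (C : Type) (AlgC : UAlg σ C) (f : s → C),
      IsHom (UAlg.sub (AlgA i) s hs) AlgC f → Function.Surjective f →
      ∃ (j : ι) (φ : C → A j), IsHom AlgC (AlgA j) φ ∧ Function.Bijective φ)
    (S : Type) [Fintype S] (AlgS : UAlg σ S)
    -- a representation of S as a quotient of a subalgebra of a product of p members of K:
    (p : ℕ) (g : Fin p → ι)
    (Bset : Set (∀ j, A (g j)))
    (hBsub : IsSubalgebra (UAlg.pi fun j => AlgA (g j)) Bset)
    (f : Bset → S)
    (hf : IsHom (UAlg.sub (UAlg.pi fun j => AlgA (g j)) Bset hBsub) AlgS f)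
    (hfs : Function.Surjective f)
    -- minimality of the number p of factors:
    (hmin : ∀ (q : ℕ) (g' : Fin q → ι) (B' : Set (∀ j, A (g' j)))
      (hB' : IsSubalgebra (UAlg.pi fun j => AlgA (g' j)) B')
      (f' : B' → S), IsHom (UAlg.sub (UAlg.pi fun j => AlgA (g' j)) B' hB') AlgS f' →
      Function.Surjective f' → p ≤ q)
    -- boolean-type monolith data over π = ker f: a two-element (π, μ)-minimal set {x, y}:
    (x y : Bset) (hxy : f x ≠ f y)
    (e : Bset → Bset)
    (he : IsUnaryPolynomial (UAlg.sub (UAlg.pi fun j => AlgA (g j)) Bset hBsub) e)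
    (hidem : ∀ a, e (e a) = e a) (hrange : Set.range e = {x, y})
    -- π is meet-irreducible: every congruence strictly above π contains the pair (x, y):
    (hMI : ∀ θ, IsCongruence (UAlg.sub (UAlg.pi fun j => AlgA (g j)) Bset hBsub) θ →
      (∀ a b : Bset, f a = f b → θ a b) → θ ≠ (fun a b => f a = f b) → θ x y) :
    (∃ (i : ι) (s : Set (A i)) (hs : IsSubalgebra (AlgA i) s) (h : s → S),
      IsHom (UAlg.sub (AlgA i) s hs) AlgS h ∧ Function.Surjective h) ∧
    (∃ i : ι, Nat.card S ≤ Nat.card (A i)) := by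
  classical
  by_cases hp2 : 2 ≤ p
  · -- p ≥ 2 : contradiction via the two congruences η̂₀, η̂₁
    exfalso
    set BAlg := UAlg.sub (UAlg.pi fun j => AlgA (g j)) Bset hBsub with hBAlgdef
    have hπ : IsCongruence BAlg (fun a b => f a = f b) :=
      ker_cong BAlg AlgS f hf
    -- the congruences η̂ᵢ
    set θ : Fin p → (Bset → Bset → Prop) :=
      fun i a b => ∀ j : Fin p, j ≠ i → (a : ∀ j, A (g j)) j = (b : ∀ j, A (g j)) j with hθdef
    have hθ : ∀ i, IsCongruence BAlg (θ i) := by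
      intro i
      constructor
      · exact ⟨fun a j hj => rfl, fun h j hj => (h j hj).symm,
          fun h1 h2 j hj => (h1 j hj).trans (h2 j hj)⟩
      · intro o xs ys h j hj
        show (AlgA (g j)).interp o (fun m => (xs m : ∀ j, A (g j)) j)
          = (AlgA (g j)).interp o (fun m => (ys m : ∀ j, A (g j)) j)
        congr 1
        funext m
        exact h m j hj
    -- facts about e
    have hxmem : x ∈ Set.range e := by rw [hrange]; exact Set.mem_insert _ _
    have hymem : y ∈ Set.range e := by
      rw [hrange]; exact Set.mem_insert_of_mem _ rfl
    obtain ⟨zx, hzx⟩ := hxmem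
    obtain ⟨zy, hzy⟩ := hymem
    have hex : e x = x := by rw [← hzx]; exact hidem zx
    have hey : e y = y := by rw [← hzy]; exact hidem zy
    have hcollapse : ∀ a b : Bset, f a = f b → e a = e b := by
      intro a b hab
      have hfe : f (e a) = f (e b) := upoly_cong he hπ hab
      have hea : e a = x ∨ e a = y := by
        have h' : e a ∈ Set.range e := ⟨a, rfl⟩
        rw [hrange] at h'
        simpa using h'
      have heb : e b = x ∨ e b = y := by
        have h' : e b ∈ Set.range e := ⟨b, rfl⟩
        rw [hrange] at h'
        simpa using h'
      rcases hea with hea | hea <;> rcases heb with heb | heb <;>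
        rw [hea, heb] at hfe ⊢
      · exact absurd hfe hxy
      · exact absurd hfe.symm hxy
    -- each η̂ᵢ has a pair not identified by f (else p would not be minimal)
    have key1 : ∀ i : Fin p, ∃ a b : Bset, θ i a b ∧ f a ≠ f b := by
      intro i
      by_contra hcon
      push_neg at hcon
      have hcon' : ∀ a b : Bset, θ i a b → f a = f b := hcon
      -- the coordinate-skipping map
      set m : Fin (p - 1) → Fin p := fun j =>
        if h : (j : ℕ) < (i : ℕ) then ⟨j, by omega⟩
        else ⟨(j : ℕ) + 1, by have := j.isLt; omega⟩ with hmdef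
      have hsurj : ∀ j : Fin p, j ≠ i → ∃ k, m k = j := by
        intro j hj
        have hne : (j : ℕ) ≠ (i : ℕ) := fun h => hj (Fin.ext h)
        by_cases hlt : (j : ℕ) < (i : ℕ)
        · refine ⟨⟨(j : ℕ), by have := i.isLt; omega⟩, ?_⟩
          apply Fin.ext
          simp [hmdef, hlt]
        · refine ⟨⟨(j : ℕ) - 1, by have := j.isLt; omega⟩, ?_⟩
          apply Fin.ext
          have hni : ¬ (((j : ℕ) - 1) < (i : ℕ)) := by omega
          simp [hmdef, hni]
          omega
      have hr : IsHom (UAlg.pi fun j => AlgA (g j)) (UAlg.pi fun k => AlgA (g (m k)))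
          (fun v k => v (m k)) := fun o xs => rfl
      have hwd : ∀ a b : Bset,
          (fun v k => v (m k)) (a : ∀ j, A (g j)) = (fun v k => v (m k)) (b : ∀ j, A (g j)) →
          f a = f b := by
        intro a b hab
        refine hcon' a b (fun j hj => ?_)
        obtain ⟨k, rfl⟩ := hsurj j hj
        exact congrFun hab k
      obtain ⟨hsub, f', hhom, hsurj'⟩ :=
        imageRep (UAlg.pi fun j => AlgA (g j)) (UAlg.pi fun k => AlgA (g (m k))) AlgS
          Bset hBsub (fun v k => v (m k)) hr f hf hfs hwd
      have := hmin (p - 1) (fun k => g (m k)) _ hsub f' hhom hsurj'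
      omega
    -- each η̂ᵢ identifies x and y
    have key2 : ∀ i : Fin p, θ i x y := by
      intro i
      set ρ := Relation.ReflTransGen (fun a b : Bset => θ i a b ∨ f a = f b) with hρdef
      have hρ : IsCongruence BAlg ρ := join_cong (hθ i) hπ
      have hρπ : ∀ a b : Bset, f a = f b → ρ a b :=
        fun a b h => Relation.ReflTransGen.single (Or.inr h)
      have hρne : ρ ≠ fun a b => f a = f b := by
        obtain ⟨a, b, hab, hnab⟩ := key1 i
        intro hcon
        have : ρ a b := Relation.ReflTransGen.single (Or.inl hab)
        rw [hcon] at this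
        exact hnab this
      have hxyρ := hMI ρ hρ hρπ hρne
      have ext : ∀ a b : Bset, ρ a b → θ i (e a) (e b) := by
        intro a b h
        induction h with
        | refl => exact (hθ i).1.refl _
        | @tail c d h1 h2 ih =>
          rcases h2 with h2 | h2
          · exact (hθ i).1.trans ih (upoly_cong he (hθ i) h2)
          · rw [← hcollapse _ _ h2]
            exact ih
      have := ext x y hxyρ
      rwa [hex, hey] at this
    -- x = y, contradiction
    have hxyeq : x = y := by
      apply Subtype.ext
      funext j
      by_cases hj : j = ⟨0, by omega⟩
      · refine key2 ⟨1, by omega⟩ j ?_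
        rw [hj]
        intro hc
        have := congrArg Fin.val hc
        simp at this
      · exact key2 ⟨0, by omega⟩ j hj
    exact hxy (congrArg f hxyeq)
  · -- p ≤ 1; in fact p = 1 and S ∈ HS(A (g 0))
    have hp0 : p ≠ 0 := by
      intro hp
      refine hxy (congrArg f (Subtype.ext (funext fun j => ?_)))
      exact absurd j.isLt (by omega)
    set i0 : Fin p := ⟨0, by omega⟩ with hi0
    have hr : IsHom (UAlg.pi fun j => AlgA (g j)) (AlgA (g i0)) (fun v => v i0) :=
      fun o xs => rfl
    have hwd : ∀ a b : Bset,
        (fun v : ∀ j, A (g j) => v i0) (a : ∀ j, A (g j))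
          = (fun v : ∀ j, A (g j) => v i0) (b : ∀ j, A (g j)) → f a = f b := by
      intro a b hab
      have : a = b := by
        apply Subtype.ext
        funext j
        have hj : j = i0 := Fin.ext (by have := j.isLt; omega)
        rw [hj]
        exact hab
      rw [this]
    obtain ⟨hsub, f', hhom, hsurj'⟩ :=
      imageRep (UAlg.pi fun j => AlgA (g j)) (AlgA (g i0)) AlgS
        Bset hBsub (fun v => v i0) hr f hf hfs hwd
    constructor
    · exact ⟨g i0, _, hsub, f', hhom, hsurj'⟩
    · refine ⟨g i0, ?_⟩
      calc Nat.card S ≤ Nat.card ((fun v : ∀ j, A (g j) => v i0) '' Bset) :=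
            Nat.card_le_card_of_surjective f' hsurj'
        _ ≤ Nat.card (A (g i0)) :=
            Nat.card_le_card_of_injective Subtype.val Subtype.val_injective
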